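/- Let f̃(T,U) = Π_{j=1}^{n+1}(T - t_j U) with t_1⋯t_{n+1} = 1 and conjugate-symmetric coefficients (so f̃ ∈ MA_n), and let g̃(X,Y) = f̃(i(X+iY), i(X-iY)) = Σ_{j} c_j X^{n+1-j} Y^j with c_0 ≠ 0. Define Dis(g̃(X,1)) = c_0^{2n} Π_{j<k}(x_j - x_k)² where x_1, ..., x_{n+1} are the roots of g̃(X,1), and let H_n be the matrix with entries h_{j-k} where h_m = Σ_j t_j^m. Then Dis(g̃(X,1)) = 2^{n(n+1)} · det H_n. -/

import Mathlib

open Complex Finset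

open Matrix in
private lemma stmt13_pair_prod {n : ℕ} (g : Fin (n+1) → ℂ) :
    ∏ j, ∏ k ∈ Finset.Ioi j, (g j * g k) = (∏ j, g j) ^ n := by
  have hswap : (∏ j : Fin (n+1), ∏ k ∈ Finset.Ioi j, g k)
      = ∏ k : Fin (n+1), ∏ _j ∈ Finset.Iio k, g k :=
    Finset.prod_comm' (by intro j k; simp)
  calc ∏ j, ∏ k ∈ Finset.Ioi j, (g j * g k)
      = (∏ j, ∏ _k ∈ Finset.Ioi j, g j) * ∏ j, ∏ k ∈ Finset.Ioi j, g k := by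
        rw [← Finset.prod_mul_distrib]
        exact Finset.prod_congr rfl fun j _ => Finset.prod_mul_distrib
    _ = ∏ j, (g j ^ (n - (j:ℕ)) * g j ^ (j:ℕ)) := by
        rw [hswap, ← Finset.prod_mul_distrib]
        refine Finset.prod_congr rfl fun j _ => ?_
        rw [Finset.prod_const, Finset.prod_const, Fin.card_Ioi, Fin.card_Iio]
        simp
    _ = (∏ j, g j) ^ n := by
        rw [← Finset.prod_pow]
        refine Finset.prod_congr rfl fun j _ => ?_
        rw [← pow_add, Nat.sub_add_cancel (Fin.is_le j)]

private lemma stmt13_four_prod (n : ℕ) :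
    (∏ j : Fin (n+1), ∏ _k ∈ Finset.Ioi j, (4:ℂ)) = 2 ^ (n*(n+1)) := by
  have h1 : ∀ j : Fin (n+1), ∏ _k ∈ Finset.Ioi j, (4:ℂ) = 4 ^ (n - (j:ℕ)) := by
    intro j; rw [Finset.prod_const, Fin.card_Ioi]; norm_num
  rw [Finset.prod_congr rfl (fun j _ => h1 j), Finset.prod_pow_eq_pow_sum]
  have h2 : ∑ j : Fin (n+1), (n - (j:ℕ)) = ∑ i ∈ Finset.range (n+1), i := by
    rw [Fin.sum_univ_eq_sum_range (fun i => n - i)]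
    rw [← Finset.sum_range_reflect (fun i => i) (n+1)]
    simp
  rw [h2]
  have h3 : 2 * ∑ i ∈ Finset.range (n+1), i = n * (n+1) := by
    rw [mul_comm, Finset.sum_range_id_mul_two]; simp [Nat.add_sub_cancel]; ring
  calc (4:ℂ) ^ (∑ i ∈ Finset.range (n+1), i) = 2 ^ (2 * ∑ i ∈ Finset.range (n+1), i) := by
        rw [pow_mul]; norm_num
    _ = 2 ^ (n*(n+1)) := by rw [h3]

open Matrix in
private lemma stmt13_disc_transfer {n : ℕ} (x x' : Fin (n+1) → ℂ)
    (hps : ∀ m : ℕ, ∑ l, x l ^ m = ∑ l, x' l ^ m) :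
    (∏ j, ∏ k ∈ Finset.Ioi j, (x j - x k)^2)
      = ∏ j, ∏ k ∈ Finset.Ioi j, (x' j - x' k)^2 := by
  have e1 : ∀ (y : Fin (n+1) → ℂ), (∏ j, ∏ k ∈ Finset.Ioi j, (y j - y k)^2)
      = ((Matrix.vandermonde y)ᵀ * Matrix.vandermonde y).det := by
    intro y
    rw [Matrix.det_mul, Matrix.det_transpose, Matrix.det_vandermonde]
    have h : ∀ j k : Fin (n+1), (y j - y k)^2 = (y k - y j) * (y k - y j) := by
      intro j k; ring
    simp_rw [h, Finset.prod_mul_distrib]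
  have e2 : ∀ (y : Fin (n+1) → ℂ), ((Matrix.vandermonde y)ᵀ * Matrix.vandermonde y)
      = Matrix.of (fun j k : Fin (n+1) => ∑ l, y l ^ ((j:ℕ) + (k:ℕ))) := by
    intro y
    ext j k
    simp only [Matrix.mul_apply, Matrix.transpose_apply, Matrix.vandermonde_apply,
      Matrix.of_apply]
    exact Finset.sum_congr rfl fun l _ => (pow_add _ _ _).symm
  rw [e1, e1, e2, e2]
  congr 1
  ext j k
  simp only [Matrix.of_apply]
  exact hps _

open Matrix in
private lemma stmt13_detH {n : ℕ} (t : Fin (n + 1) → ℂ) (ht : ∏ j, t j = 1)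
    (ht0 : ∀ j, t j ≠ 0) :
    (Matrix.of fun j k : Fin (n + 1) => ∑ l, t l ^ ((j : ℤ) - (k : ℤ))).det
      = ∏ j, ∏ k ∈ Finset.Ioi j, (-((t k - t j) ^ 2)) := by
  have hAB : (Matrix.of fun j k : Fin (n + 1) => ∑ l, t l ^ ((j : ℤ) - (k : ℤ)))
      = (Matrix.vandermonde t)ᵀ * Matrix.vandermonde (fun l => (t l)⁻¹) := by
    ext j k
    simp only [Matrix.of_apply, Matrix.mul_apply, Matrix.transpose_apply,
      Matrix.vandermonde_apply]
    refine Finset.sum_congr rfl fun l _ => ?_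
    rw [zpow_sub₀ (ht0 l), div_eq_mul_inv, zpow_natCast, zpow_natCast, inv_pow]
  rw [hAB, Matrix.det_mul, Matrix.det_transpose, Matrix.det_vandermonde,
    Matrix.det_vandermonde]
  have h1 : ∀ j ∈ (Finset.univ : Finset (Fin (n+1))), ∀ k ∈ Finset.Ioi j,
      (t k)⁻¹ - (t j)⁻¹ = (t j - t k) * ((t j)⁻¹ * (t k)⁻¹) := by
    intro j _ k _
    have h2 : (t j - t k) * ((t j)⁻¹ * (t k)⁻¹)
        = (t j * (t j)⁻¹) * (t k)⁻¹ - (t k * (t k)⁻¹) * (t j)⁻¹ := by ring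
    rw [h2, mul_inv_cancel₀ (ht0 j), mul_inv_cancel₀ (ht0 k), one_mul, one_mul]
  calc (∏ j, ∏ k ∈ Finset.Ioi j, (t k - t j)) *
        ∏ j, ∏ k ∈ Finset.Ioi j, ((t k)⁻¹ - (t j)⁻¹)
      = (∏ j, ∏ k ∈ Finset.Ioi j, (t k - t j)) *
        ((∏ j, ∏ k ∈ Finset.Ioi j, (t j - t k)) *
          ∏ j, ∏ k ∈ Finset.Ioi j, ((t j)⁻¹ * (t k)⁻¹)) := by
        congr 1
        rw [← Finset.prod_mul_distrib]
        refine Finset.prod_congr rfl fun j hj => ?_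
        rw [← Finset.prod_mul_distrib]
        exact Finset.prod_congr rfl fun k hk => h1 j hj k hk
    _ = ∏ j, ∏ k ∈ Finset.Ioi j, (-((t k - t j) ^ 2)) := by
        rw [stmt13_pair_prod (fun j => (t j)⁻¹), Finset.prod_inv_distrib, ht, inv_one,
          one_pow, mul_one, ← Finset.prod_mul_distrib]
        refine Finset.prod_congr rfl fun j _ => ?_
        rw [← Finset.prod_mul_distrib]
        exact Finset.prod_congr rfl fun k _ => by ring

/-- Theorem 2.9: for `f̃(T,U) = Π (T - tⱼU)` with `Π tⱼ = 1`, real image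
`g̃(X,Y) = f̃(i(X+iY), i(X-iY)) = Σ cⱼ X^{n+1-j} Y^j` with `c₀ ≠ 0` and roots `xⱼ` of
`g̃(X,1)`, the discriminant `Dis(g̃(X,1)) = c₀^{2n} Π_{j<k} (xⱼ-xₖ)²` equals
`2^{n(n+1)} det H_n` where `H_n = (h_{j-k})`, `h_m = Σ tⱼ^m`. -/
theorem stmt13 (n : ℕ) (t : Fin (n + 1) → ℂ) (ht : ∏ j, t j = 1)
    (c : Fin (n + 2) → ℝ)
    (hfg : ∀ X Y : ℂ,
      ∏ j, (Complex.I * (X + Complex.I * Y) - t j * (Complex.I * (X - Complex.I * Y)))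
        = ∑ j : Fin (n + 2), (c j : ℂ) * X ^ (n + 1 - (j : ℕ)) * Y ^ (j : ℕ))
    (hc0 : c 0 ≠ 0)
    (x : Fin (n + 1) → ℂ)
    (hx : ∀ X : ℂ, (∑ j : Fin (n + 2), (c j : ℂ) * X ^ (n + 1 - (j : ℕ)))
      = (c 0 : ℂ) * ∏ j, (X - x j)) :
    (c 0 : ℂ) ^ (2 * n) * ∏ j : Fin (n + 1), ∏ k ∈ Finset.Ioi j, (x j - x k) ^ 2
      = 2 ^ (n * (n + 1)) *
        (Matrix.of fun j k : Fin (n + 1) => ∑ l, t l ^ ((j : ℤ) - (k : ℤ))).det := by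
  have ht0 : ∀ j, t j ≠ 0 := fun j =>
    Finset.prod_ne_zero_iff.mp (ht ▸ one_ne_zero) j (Finset.mem_univ j)
  -- value of c₀ from Y = 0
  have hc0v : (c 0 : ℂ) = ∏ j, ((1 - t j) * Complex.I) := by
    have h := hfg 1 0
    rw [Fin.sum_univ_succ] at h
    simp at h
    rw [← h]
    exact Finset.prod_congr rfl fun j _ => by ring
  have htne1 : ∀ j, (1 : ℂ) - t j ≠ 0 := by
    intro j
    have hne : (c 0 : ℂ) ≠ 0 := Complex.ofReal_ne_zero.mpr hc0
    rw [hc0v, Finset.prod_ne_zero_iff] at hne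
    have h2 := hne j (Finset.mem_univ j)
    intro h; rw [h] at h2; simp at h2
  -- the explicit roots
  set x' : Fin (n+1) → ℂ := fun j => -(Complex.I * (1 + t j)) / (1 - t j) with hx'
  have hfact : ∀ (j) (X : ℂ),
      Complex.I * (X + Complex.I) - t j * (Complex.I * (X - Complex.I))
        = ((1 - t j) * Complex.I) * (X - x' j) := by
    intro j X
    have h2 : ((1 - t j) * Complex.I) * (X - x' j)
        = ((1 - t j) * Complex.I) * X + Complex.I * Complex.I * (1 + t j) := by
      have h1 := htne1 j
      simp only [hx']
      field_simp
      ring_nf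
    rw [h2]; ring
  have hpe : ∀ X : ℂ, ∏ j, (X - x j) = ∏ j, (X - x' j) := by
    intro X
    refine mul_left_cancel₀ (Complex.ofReal_ne_zero.mpr hc0) ?_
    have h1 := hfg X 1
    simp only [mul_one, one_pow] at h1
    rw [← hx X, ← h1, hc0v, ← Finset.prod_mul_distrib]
    exact Finset.prod_congr rfl fun j _ => hfact j X
  -- the multisets of roots coincide
  have hms : Multiset.map x Finset.univ.val = Multiset.map x' Finset.univ.val := by
    have hpoly : (Multiset.map (fun a => Polynomial.X - Polynomial.C a)
          (Multiset.map x Finset.univ.val)).prod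
        = (Multiset.map (fun a => Polynomial.X - Polynomial.C a)
          (Multiset.map x' Finset.univ.val)).prod := by
      apply Polynomial.funext
      intro r
      have h := hpe r
      simp only [Polynomial.eval_multiset_prod, Multiset.map_map, Function.comp,
        Polynomial.eval_sub, Polynomial.eval_X, Polynomial.eval_C]
      rw [← Finset.prod_eq_multiset_prod, ← Finset.prod_eq_multiset_prod]
      exact h
    have h1 := Polynomial.roots_multiset_prod_X_sub_C (Multiset.map x Finset.univ.val)
    have h2 := Polynomial.roots_multiset_prod_X_sub_C (Multiset.map x' Finset.univ.val)
    rw [← h1, ← h2, hpoly]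
  -- hence all power sums coincide
  have hps : ∀ m : ℕ, ∑ l, x l ^ m = ∑ l, x' l ^ m := by
    intro m
    rw [Finset.sum_eq_multiset_sum, Finset.sum_eq_multiset_sum,
      show Multiset.map (fun l => x l ^ m) Finset.univ.val
        = Multiset.map (fun a => a ^ m) (Multiset.map x Finset.univ.val) from
        (Multiset.map_map _ _ _).symm,
      show Multiset.map (fun l => x' l ^ m) Finset.univ.val
        = Multiset.map (fun a => a ^ m) (Multiset.map x' Finset.univ.val) from
        (Multiset.map_map _ _ _).symm, hms]
  -- transfer the discriminant to the explicit roots and compute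
  rw [stmt13_disc_transfer x x' hps, stmt13_detH t ht ht0]
  have hdiff : ∀ j k, x' j - x' k
      = -2 * Complex.I * (t j - t k) * ((1 - t j)⁻¹ * (1 - t k)⁻¹) := by
    intro j k
    have h1 := htne1 j
    have h2 := htne1 k
    simp only [hx']
    field_simp
    ring
  have hx'd : ∀ j k, (x' j - x' k) ^ 2
      = 4 * (-((t k - t j) ^ 2)) * (((1 - t j)⁻¹) ^ 2 * ((1 - t k)⁻¹) ^ 2) := by
    intro j k
    rw [hdiff]
    linear_combination (4 * (t j - t k)^2 * ((1 - t j)⁻¹ * (1 - t k)⁻¹)^2) * Complex.I_sq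
  have hone : (c 0 : ℂ) ^ (2 * n) * ((∏ j, ((1 - t j)⁻¹) ^ 2) ^ n) = 1 := by
    have hP : (∏ j, ((1 - t j) : ℂ)) ≠ 0 := Finset.prod_ne_zero_iff.mpr fun j _ => htne1 j
    have hc0P : (c 0 : ℂ) = (∏ j, ((1 - t j) : ℂ)) * Complex.I ^ (n + 1) := by
      rw [hc0v, Finset.prod_mul_distrib, Finset.prod_const, Finset.card_univ,
        Fintype.card_fin]
    have hI : (Complex.I ^ (n + 1)) ^ (2 * n) = 1 := by
      rw [← pow_mul, show (n + 1) * (2 * n) = 2 * (n * (n + 1)) by ring, pow_mul,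
        Complex.I_sq, (Nat.even_mul_succ_self n).neg_one_pow]
    have hG : (∏ j, ((1 - t j)⁻¹ : ℂ) ^ 2) ^ n = ((∏ j, ((1 - t j) : ℂ))⁻¹) ^ (2 * n) := by
      rw [Finset.prod_pow, Finset.prod_inv_distrib, ← pow_mul, mul_comm 2 n]
    rw [hc0P, hG, mul_pow, mul_comm (((∏ j, ((1 - t j) : ℂ))) ^ (2*n)), mul_assoc, hI,
      ← mul_pow, mul_inv_cancel₀ hP, one_pow, mul_one]
  have hgg : (∏ j : Fin (n+1), ∏ _k ∈ Finset.Ioi j, ((1 - t j)⁻¹) ^ 2) *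
      (∏ j : Fin (n+1), ∏ k ∈ Finset.Ioi j, ((1 - t k)⁻¹) ^ 2)
      = (∏ j, ((1 - t j)⁻¹) ^ 2) ^ n := by
    rw [← stmt13_pair_prod]
    simp_rw [Finset.prod_mul_distrib]
  simp_rw [hx'd, Finset.prod_mul_distrib]
  rw [stmt13_four_prod]
  set D := ∏ j : Fin (n+1), ∏ k ∈ Finset.Ioi j, (-((t k - t j) ^ 2)) with hD
  set G := ∏ j, ((1 - t j)⁻¹ : ℂ) ^ 2 with hG2
  linear_combination ((c 0 : ℂ) ^ (2 * n) * 2 ^ (n * (n + 1)) * D) * hgg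
    + (2 ^ (n * (n + 1)) * D) * hone
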